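/- In the transductive Context-FTPL setup with predictors, fix a perturbation realization (ℓ_x)_{x ∈ X} with ℓ_x ∈ ℝ^K, a sequence (x^1,f^1),…,(x^T,f^T) of contexts x^t ∈ X and loss functions f^t : {0,1}^K → ℝ, and predictors Q^1,…,Q^T : {0,1}^K → ℝ. For each t let π^t be a minimizer over π ∈ Π of Σ_{τ=1}^{t−1} f^τ(π(x^τ)) + Q^t(π(x^t)) + Σ_{x ∈ X} ⟨π(x), ℓ_x⟩, let ρ^t be a minimizer over π ∈ Π of Σ_{τ=1}^{t} f^τ(π(x^τ)) + Σ_{x ∈ X} ⟨π(x), ℓ_x⟩, and set a^t := π^t(x^t), b^t := ρ^t(x^t), ΔQ^t := f^t − Q^t. Then for every π* ∈ Π: Σ_{t=1}^T f^t(a^t) − Σ_{t=1}^T f^t(π*(x^t)) ≤ Σ_{t=1}^T ( ΔQ^t(a^t) − ΔQ^t(b^t) ) + [ max_{π ∈ Π} Σ_{x ∈ X} ⟨π(x), ℓ_x⟩ − min_{π ∈ Π} Σ_{x ∈ X} ⟨π(x), ℓ_x⟩ ]. (Lemma: Follow vs Be the Leader with Predictors, pathwise form.) -/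

import Mathlib

open Finset

/-- `⟨a, v⟩` for `a ∈ {0,1}^K` (as a Boolean vector) and `v ∈ ℝ^K`. -/
def dotp {K : ℕ} (a : Fin K → Bool) (v : Fin K → ℝ) : ℝ :=
  ∑ j, if a j then v j else 0

/-- **Follow vs Be the Leader with Predictors** (pathwise form, transductive
Context-FTPL setup).  `ℓx` is a fixed perturbation realization, `π t` is any
minimizer of the history-plus-predictor-plus-perturbation cost
`∑_{τ<t} f^τ(p(x^τ)) + Q^t(p(x^t)) + ∑_x ⟨p(x), ℓ_x⟩`, and `ρ t` any minimizer
of `∑_{τ≤t} f^τ(p(x^τ)) + ∑_x ⟨p(x), ℓ_x⟩`.  Then for every comparator `π*`,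
the regret of the plays `a^t = π^t(x^t)` is at most
`∑_t (ΔQ^t(a^t) − ΔQ^t(b^t))` plus the Error term, where `ΔQ^t = f^t − Q^t`
and `b^t = ρ^t(x^t)`. -/
theorem follow_vs_be_the_leader_with_predictors
    {X P : Type*} [Fintype X] [Fintype P] [Nonempty P]
    {K m d N : ℕ} (hK : 1 ≤ K) (hm : 1 ≤ m)
    (hd : Fintype.card X = d) (hN : Fintype.card P = N) (hN2 : 2 ≤ N)
    (pol : P → X → Fin K → Bool)
    (hsparse : ∀ p x, (Finset.univ.filter fun j => pol p x j = true).card ≤ m)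
    (ℓx : X → Fin K → ℝ)
    (T : ℕ) (xs : ℕ → X) (f Q : ℕ → (Fin K → Bool) → ℝ) (π ρ : ℕ → P)
    (hπ : ∀ t ∈ Finset.range T, ∀ p : P,
      ((∑ τ ∈ Finset.range t, f τ (pol (π t) (xs τ))) + Q t (pol (π t) (xs t)) +
          ∑ xc : X, dotp (pol (π t) xc) (ℓx xc)) ≤
        ((∑ τ ∈ Finset.range t, f τ (pol p (xs τ))) + Q t (pol p (xs t)) +
          ∑ xc : X, dotp (pol p xc) (ℓx xc)))
    (hρ : ∀ t ∈ Finset.range T, ∀ p : P,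
      ((∑ τ ∈ Finset.range (t + 1), f τ (pol (ρ t) (xs τ))) +
          ∑ xc : X, dotp (pol (ρ t) xc) (ℓx xc)) ≤
        ((∑ τ ∈ Finset.range (t + 1), f τ (pol p (xs τ))) +
          ∑ xc : X, dotp (pol p xc) (ℓx xc)))
    (πstar : P) :
    ((∑ t ∈ Finset.range T, f t (pol (π t) (xs t))) -
        ∑ t ∈ Finset.range T, f t (pol πstar (xs t))) ≤
      (∑ t ∈ Finset.range T,
          ((f t (pol (π t) (xs t)) - Q t (pol (π t) (xs t))) -
            (f t (pol (ρ t) (xs t)) - Q t (pol (ρ t) (xs t))))) +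
        ((Finset.univ.sup' Finset.univ_nonempty fun p : P =>
            ∑ xc : X, dotp (pol p xc) (ℓx xc)) -
          (Finset.univ.inf' Finset.univ_nonempty fun p : P =>
            ∑ xc : X, dotp (pol p xc) (ℓx xc))) := by
  set R : P → ℝ := fun p => ∑ xc : X, dotp (pol p xc) (ℓx xc) with hRdef
  have key : ∀ n, n ≤ T → ∀ p : P,
      (Finset.univ.inf' Finset.univ_nonempty R) +
        ∑ t ∈ Finset.range n,
          (Q t (pol (π t) (xs t)) + f t (pol (ρ t) (xs t)) - Q t (pol (ρ t) (xs t)))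
      ≤ (∑ t ∈ Finset.range n, f t (pol p (xs t))) + R p := by
    intro n
    induction n with
    | zero =>
      intro _ p
      simpa only [Finset.sum_range_zero, add_zero, zero_add] using Finset.inf'_le R (Finset.mem_univ p)
    | succ n ih =>
      intro hn p
      have hnT : n ∈ Finset.range T := Finset.mem_range.mpr (by omega)
      have h1 := hρ n hnT p
      have h2 := hπ n hnT (ρ n)
      have h3 := ih (by omega) (π n)
      rw [Finset.sum_range_succ, Finset.sum_range_succ] at h1
      rw [Finset.sum_range_succ]
      rw [Finset.sum_range_succ]
      linarith
  have hfin := key T le_rfl πstar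
  have hsup : R πstar ≤ Finset.univ.sup' Finset.univ_nonempty R :=
    Finset.le_sup' R (Finset.mem_univ _)
  have expand : (∑ t ∈ Finset.range T,
      ((f t (pol (π t) (xs t)) - Q t (pol (π t) (xs t))) -
        (f t (pol (ρ t) (xs t)) - Q t (pol (ρ t) (xs t))))) =
      (∑ t ∈ Finset.range T, f t (pol (π t) (xs t))) -
        ∑ t ∈ Finset.range T,
          (Q t (pol (π t) (xs t)) + f t (pol (ρ t) (xs t)) - Q t (pol (ρ t) (xs t))) := by
    rw [← Finset.sum_sub_distrib]
    exact Finset.sum_congr rfl fun t _ => by ring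
  linarith
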